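/- Let {(x_i, g_i, f_i)}_{i∈I} be a finite set of triples in E × E × ℝ satisfying f_i = 0, ⟨g_j, x_i − x_j⟩ ≤ 0 and ‖x_i‖ ≤ D for all i, j ∈ I. Then there exists a closed convex set Q contained in the closed ball of radius D centered at the origin, such that for all i: x_i ∈ Q and ⟨g_i, x − x_i⟩ ≤ 0 for all x ∈ Q. -/

import Mathlib

/-- Sufficiency of the bounded-indicator interpolation conditions: there is a closed
convex set `Q` inside the ball of radius `D` containing all `x_i`, with each `g_i`
in the normal cone of `Q` at `x_i`. -/
theorem stmt6 {E : Type*} [NormedAddCommGroup E] [InnerProductSpace ℝ E]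
    [FiniteDimensional ℝ E] {ι : Type*} [Fintype ι] (D : ℝ) (hD : 0 < D)
    (x g : ι → E) (f : ι → ℝ)
    (hf : ∀ i, f i = 0)
    (hineq : ∀ i j, (inner ℝ (g j) (x i - x j) : ℝ) ≤ 0)
    (hbound : ∀ i, ‖x i‖ ≤ D) :
    ∃ Q : Set E, IsClosed Q ∧ Convex ℝ Q ∧ Q ⊆ Metric.closedBall (0 : E) D ∧
      ∀ i, x i ∈ Q ∧ ∀ y ∈ Q, (inner ℝ (g i) (y - x i) : ℝ) ≤ 0 := by
  refine ⟨(convexHull ℝ (Set.range x)) ∩ ⋂ j, {y | (inner ℝ (g j) y : ℝ) ≤ inner ℝ (g j) (x j)},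
    ?_, ?_, ?_, ?_⟩
  · refine IsClosed.inter ((Set.finite_range x).isClosed_convexHull (𝕜 := ℝ)) ?_
    exact isClosed_iInter fun j => isClosed_le (Continuous.inner continuous_const continuous_id)
      continuous_const
  · refine (convex_convexHull ℝ _).inter (convex_iInter fun j => ?_)
    exact convex_halfSpace_le ⟨fun a b => inner_add_right _ a b,
      fun c a => real_inner_smul_right _ _ c⟩ _
  · intro y hy
    have : convexHull ℝ (Set.range x) ⊆ Metric.closedBall (0 : E) D := by
      apply convexHull_min _ (convex_closedBall _ _)
      rintro _ ⟨i, rfl⟩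
      simpa using hbound i
    exact this hy.1
  · intro i
    constructor
    · refine ⟨subset_convexHull ℝ _ ⟨i, rfl⟩, Set.mem_iInter.2 fun j => ?_⟩
      show (inner ℝ (g j) (x i) : ℝ) ≤ inner ℝ (g j) (x j)
      have := hineq i j
      rwa [inner_sub_right, sub_nonpos] at this
    · intro y hy
      have h : (inner ℝ (g i) y : ℝ) ≤ inner ℝ (g i) (x i) := Set.mem_iInter.1 hy.2 i
      rw [inner_sub_right]
      exact sub_nonpos.2 h
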